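/- Let d ≥ 1 and θ ∈ (0, 1/2). Then there exists a constant c > 0, depending only on d and θ, such that for every bounded measurable f : ℝ^d → ℝ with [f]_{2θ} < ∞ and every t > 0, ‖P_t f − f‖_∞ ≤ c t^{θ} [f]_{2θ}. -/

import Mathlib

open MeasureTheory

noncomputable section

open Real

/-- The Gaussian heat kernel `g_t(x) = (2πt)^{-d/2} exp(-|x|²/(2t))` on `ℝ^d`. -/
def heatKernel (d : ℕ) (t : ℝ) (x : EuclideanSpace ℝ (Fin d)) : ℝ :=
  (2 * Real.pi * t) ^ (-(d : ℝ) / 2) * Real.exp (-‖x‖ ^ 2 / (2 * t))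

variable {d : ℕ}

lemma hk_eq {t : ℝ} (ht : 0 < t) (z : EuclideanSpace ℝ (Fin d)) :
    heatKernel d t z = (2 * Real.pi * t) ^ (-(d : ℝ) / 2) * Real.exp (-(1/(2*t)) * ‖z‖^2) := by
  unfold heatKernel
  congr 1
  congr 1
  field_simp

lemma hk_nonneg {t : ℝ} (ht : 0 < t) (z : EuclideanSpace ℝ (Fin d)) :
    0 ≤ heatKernel d t z := by
  unfold heatKernel
  have h2 : (0:ℝ) < 2 * Real.pi * t := by positivity
  positivity

lemma myInt {b : ℝ} (hb : 0 < b) :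
    Integrable (fun v : EuclideanSpace ℝ (Fin d) => Real.exp (-b * ‖v‖^2)) := by
  have h := (GaussianFourier.integrable_cexp_neg_mul_sq_norm_add (V := EuclideanSpace ℝ (Fin d))
      (b := (b:ℂ)) (by simpa using hb) 0 0).norm
  refine h.congr (Filter.Eventually.of_forall fun v => ?_)
  simp [Complex.norm_exp]
  left; norm_cast

lemma myVal {b : ℝ} (hb : 0 < b) :
    ∫ v : EuclideanSpace ℝ (Fin d), Real.exp (-b * ‖v‖^2) = (Real.pi / b) ^ ((d:ℝ) / 2) := by
  rw [GaussianFourier.integral_rexp_neg_mul_sq_norm hb]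
  simp [finrank_euclideanSpace_fin]

lemma myMom {b p : ℝ} (hb : 0 < b) (hp : 0 ≤ p) (hp2 : p ≤ 2) :
    Integrable (fun v : EuclideanSpace ℝ (Fin d) => Real.exp (-b * ‖v‖^2) * ‖v‖ ^ p) := by
  have hmaj : Integrable (fun v : EuclideanSpace ℝ (Fin d) =>
      (1 + 2/b) * Real.exp (-(b/2) * ‖v‖^2)) := (myInt (by linarith)).const_mul _
  refine hmaj.mono ?_ (Filter.Eventually.of_forall fun v => ?_)
  · exact ((Real.continuous_exp.comp (by continuity)).mul
      (continuous_norm.rpow_const fun x => Or.inr hp)).aestronglyMeasurable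
  · rw [Real.norm_eq_abs, Real.norm_eq_abs]
    have h0 : (0:ℝ) ≤ ‖v‖ := norm_nonneg v
    have h1 : ‖v‖ ^ p ≤ 1 + ‖v‖^2 := by
      rcases le_total ‖v‖ 1 with h | h
      · have := Real.rpow_le_one h0 h hp
        nlinarith [sq_nonneg ‖v‖]
      · have h2 : ‖v‖ ^ p ≤ ‖v‖ ^ (2:ℝ) := Real.rpow_le_rpow_of_exponent_le h hp2
        rw [Real.rpow_two] at h2
        linarith
    have h2 : ‖v‖^2 ≤ (2/b) * Real.exp ((b/2) * ‖v‖^2) := by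
      have h := Real.add_one_le_exp ((b/2) * ‖v‖^2)
      have hb2 : (0:ℝ) < b/2 := by linarith
      rw [div_mul_eq_mul_div, le_div_iff₀ hb]
      nlinarith
    have h3 : (1:ℝ) ≤ Real.exp ((b/2) * ‖v‖^2) := by
      rw [← Real.exp_zero]
      exact Real.exp_le_exp.2 (by positivity)
    have hE : Real.exp (-b * ‖v‖^2) = Real.exp (-(b/2) * ‖v‖^2) * (Real.exp ((b/2)*‖v‖^2))⁻¹ := by
      rw [← Real.exp_neg, ← Real.exp_add]; ring_nf
    have hexp := Real.exp_pos ((b/2)*‖v‖^2)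
    rw [abs_of_nonneg (by positivity), abs_of_nonneg (by positivity), hE]
    calc Real.exp (-(b/2) * ‖v‖^2) * (Real.exp ((b/2)*‖v‖^2))⁻¹ * ‖v‖ ^ p
        ≤ Real.exp (-(b/2) * ‖v‖^2) * (Real.exp ((b/2)*‖v‖^2))⁻¹ * (1 + ‖v‖^2) := by
          apply mul_le_mul_of_nonneg_left h1; positivity
      _ ≤ Real.exp (-(b/2) * ‖v‖^2) * (Real.exp ((b/2)*‖v‖^2))⁻¹ *
            ((1 + 2/b) * Real.exp ((b/2)*‖v‖^2)) := by
          apply mul_le_mul_of_nonneg_left ?_ (by positivity)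
          calc 1 + ‖v‖^2 ≤ Real.exp ((b/2)*‖v‖^2) + (2/b) * Real.exp ((b/2)*‖v‖^2) := by
                apply add_le_add h3 h2
            _ = (1 + 2/b) * Real.exp ((b/2)*‖v‖^2) := by ring
      _ = (1 + 2/b) * Real.exp (-(b/2) * ‖v‖^2) := by
          field_simp

lemma kint {t : ℝ} (ht : 0 < t) : Integrable (heatKernel d t) := by
  have h : (0:ℝ) < 1/(2*t) := by positivity
  refine ((myInt h).const_mul ((2 * Real.pi * t) ^ (-(d : ℝ) / 2))).congr
    (Filter.Eventually.of_forall fun z => (hk_eq ht z).symm)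

lemma ktotal {t : ℝ} (ht : 0 < t) : ∫ z, heatKernel d t z = 1 := by
  have h : (0:ℝ) < 1/(2*t) := by positivity
  have h2 : (0:ℝ) < 2 * Real.pi * t := by positivity
  calc ∫ z, heatKernel d t z
      = ∫ z : EuclideanSpace ℝ (Fin d),
          (2 * Real.pi * t) ^ (-(d : ℝ) / 2) * Real.exp (-(1/(2*t)) * ‖z‖^2) := by
        exact integral_congr_ae (Filter.Eventually.of_forall fun z => hk_eq ht z)
    _ = (2 * Real.pi * t) ^ (-(d : ℝ) / 2) *
          ∫ z : EuclideanSpace ℝ (Fin d), Real.exp (-(1/(2*t)) * ‖z‖^2) := integral_const_mul _ _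
    _ = (2 * Real.pi * t) ^ (-(d : ℝ) / 2) * (2 * Real.pi * t) ^ ((d:ℝ) / 2) := by
        rw [myVal h]
        congr 2
        field_simp
    _ = 1 := by
        rw [← Real.rpow_add h2, neg_div]
        norm_num

lemma kmom {t θ : ℝ} (ht : 0 < t) (hθ : 0 < θ) (hθ2 : θ < 1/2) :
    Integrable (fun z : EuclideanSpace ℝ (Fin d) => heatKernel d t z * ‖z‖ ^ (2*θ)) := by
  have h : (0:ℝ) < 1/(2*t) := by positivity
  refine (((myMom (b := 1/(2*t)) (p := 2*θ) h (by linarith) (by linarith)).const_mul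
    ((2 * Real.pi * t) ^ (-(d : ℝ) / 2))).congr
    (Filter.Eventually.of_forall fun z => ?_))
  dsimp only
  rw [hk_eq ht z]; ring

lemma intSubLeft (F : EuclideanSpace ℝ (Fin d) → ℝ) (x : EuclideanSpace ℝ (Fin d)) :
    ∫ y, F (x - y) = ∫ y, F y := by
  simp_rw [sub_eq_add_neg]
  rw [show (fun y => F (x + -y)) = (fun y => (fun z => F (x + z)) (-y)) from rfl]
  rw [integral_neg_eq_self (fun z => F (x + z)) volume]
  exact integral_add_left_eq_self (fun z => F z) x

lemma kmom_val {t θ : ℝ} (ht : 0 < t) (hθ : 0 < θ) (hθ2 : θ < 1/2) :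
    ∫ z : EuclideanSpace ℝ (Fin d), heatKernel d t z * ‖z‖ ^ (2*θ)
      = ((2*Real.pi)^(-(d:ℝ)/2) *
          ∫ w : EuclideanSpace ℝ (Fin d), Real.exp (-(1/2) * ‖w‖^2) * ‖w‖^(2*θ)) * t ^ θ := by
  set R := Real.sqrt t with hR
  have hRpos : 0 < R := Real.sqrt_pos.2 ht
  have hRd : (0:ℝ) < R ^ d := by positivity
  have hsmul := Measure.integral_comp_smul_of_nonneg (volume : Measure (EuclideanSpace ℝ (Fin d)))
    (fun z => heatKernel d t z * ‖z‖ ^ (2*θ)) R (hR := hRpos.le)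
  rw [finrank_euclideanSpace_fin] at hsmul
  simp only [smul_eq_mul] at hsmul
  have key : ∀ w : EuclideanSpace ℝ (Fin d),
      heatKernel d t (R • w) * ‖R • w‖ ^ (2*θ)
        = ((2 * Real.pi * t) ^ (-(d : ℝ) / 2) * t ^ θ) *
            (Real.exp (-(1/2) * ‖w‖^2) * ‖w‖^(2*θ)) := by
    intro w
    rw [hk_eq ht, norm_smul, Real.norm_eq_abs, abs_of_nonneg hRpos.le]
    have hR2 : R^2 = t := Real.sq_sqrt ht.le
    have e1 : -(1/(2*t)) * (R * ‖w‖)^2 = -(1/2) * ‖w‖^2 := by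
      rw [mul_pow, hR2]
      field_simp
    have e2 : (R * ‖w‖) ^ (2*θ) = t ^ θ * ‖w‖ ^ (2*θ) := by
      rw [Real.mul_rpow hRpos.le (norm_nonneg w)]
      congr 1
      rw [hR, Real.sqrt_eq_rpow, ← Real.rpow_mul ht.le]
      congr 1
      ring
    rw [e1, e2]
    ring
  have hconst : (R:ℝ)^d * (2 * Real.pi * t) ^ (-(d : ℝ) / 2) = (2*Real.pi)^(-(d:ℝ)/2) := by
    have e3 : (R:ℝ)^d = t ^ ((d:ℝ)/2) := by
      rw [← Real.rpow_natCast R d, hR, Real.sqrt_eq_rpow, ← Real.rpow_mul ht.le]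
      congr 1
      ring
    have e4 : (2 * Real.pi * t) ^ (-(d : ℝ) / 2)
        = (2*Real.pi)^(-(d:ℝ)/2) * t ^ (-(d:ℝ)/2) := by
      rw [← Real.mul_rpow (by positivity) ht.le]
    rw [e3, e4, ← mul_assoc, mul_comm (t ^ ((d:ℝ)/2)), mul_assoc, ← Real.rpow_add ht]
    have hz : (d:ℝ)/2 + -(d:ℝ)/2 = 0 := by ring
    rw [hz, Real.rpow_zero, mul_one]
  have heq : ∫ w : EuclideanSpace ℝ (Fin d), heatKernel d t (R • w) * ‖R • w‖ ^ (2*θ)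
      = ((2 * Real.pi * t) ^ (-(d : ℝ) / 2) * t ^ θ) *
          ∫ w : EuclideanSpace ℝ (Fin d), Real.exp (-(1/2) * ‖w‖^2) * ‖w‖^(2*θ) := by
    rw [← integral_const_mul]
    exact integral_congr_ae (Filter.Eventually.of_forall key)
  rw [heq] at hsmul
  have : ∫ z : EuclideanSpace ℝ (Fin d), heatKernel d t z * ‖z‖ ^ (2*θ)
      = (R:ℝ)^d * (((2 * Real.pi * t) ^ (-(d : ℝ) / 2) * t ^ θ) *
          ∫ w : EuclideanSpace ℝ (Fin d), Real.exp (-(1/2) * ‖w‖^2) * ‖w‖^(2*θ)) := by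
    calc ∫ z : EuclideanSpace ℝ (Fin d), heatKernel d t z * ‖z‖ ^ (2*θ)
        = R^d * ((R^d)⁻¹ * ∫ z : EuclideanSpace ℝ (Fin d), heatKernel d t z * ‖z‖ ^ (2*θ)) := by
          rw [← mul_assoc, mul_inv_cancel₀ hRd.ne', one_mul]
      _ = _ := by rw [← hsmul]
  rw [this, ← mul_assoc, ← mul_assoc, hconst]
  ring

/-- The heat semigroup `P_t f = g_t * f`. -/
def heatSemigroup (d : ℕ) (t : ℝ) (f : EuclideanSpace ℝ (Fin d) → ℝ)
    (x : EuclideanSpace ℝ (Fin d)) : ℝ :=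
  ∫ y, heatKernel d t (x - y) * f y

/-- **Schauder estimate** `‖P_t f − f‖_∞ ≤ c t^θ [f]_{2θ}` (Lemma 5.3(2) of the paper, in
classical Hölder spaces): rate of convergence of the heat semigroup to the identity on
Hölder functions. -/
theorem stmt13 (d : ℕ) (hd : 1 ≤ d) (θ : ℝ) (hθ : θ ∈ Set.Ioo (0:ℝ) (1/2)) :
    ∃ c : ℝ, 0 < c ∧ ∀ f : EuclideanSpace ℝ (Fin d) → ℝ, Measurable f →
      (∃ M, ∀ x, |f x| ≤ M) →
      ∀ Cf : ℝ, 0 ≤ Cf → (∀ x y, |f x - f y| ≤ Cf * ‖x - y‖ ^ (2 * θ)) →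
      ∀ t : ℝ, 0 < t → ∀ x,
        |heatSemigroup d t f x - f x| ≤ c * t ^ θ * Cf := by
  obtain ⟨hθ1, hθ2⟩ := hθ
  set I := ∫ w : EuclideanSpace ℝ (Fin d), Real.exp (-(1/2) * ‖w‖^2) * ‖w‖^(2*θ) with hI
  have hInn : 0 ≤ I := integral_nonneg fun w => by positivity
  set K := (2*Real.pi)^(-(d:ℝ)/2) * I with hK
  have hKnn : 0 ≤ K := by
    apply mul_nonneg _ hInn
    positivity
  refine ⟨K + 1, by linarith, fun f hf hbdd Cf hCf hHolder t ht x => ?_⟩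
  obtain ⟨M, hM⟩ := hbdd
  have hker := kint (d := d) ht
  have hkerx : Integrable (fun y => heatKernel d t (x - y)) := hker.comp_sub_left x
  have h2 : Integrable (fun y => heatKernel d t (x - y) * f y) := by
    refine (hkerx.bdd_mul hf.aestronglyMeasurable (c := M) (Filter.Eventually.of_forall fun y => ?_)).congr
      (Filter.Eventually.of_forall fun y => mul_comm _ _)
    simpa [Real.norm_eq_abs] using hM y
  have hmomc : Integrable (fun y => heatKernel d t (x-y) * ‖x-y‖^(2*θ)) :=
    (kmom ht hθ1 hθ2).comp_sub_left x
  have hxker : ∫ y, heatKernel d t (x - y) = 1 := by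
    rw [intSubLeft (heatKernel d t) x]; exact ktotal ht
  have key : heatSemigroup d t f x - f x = ∫ y, heatKernel d t (x-y) * (f y - f x) := by
    have e : ∫ y, heatKernel d t (x-y) * (f y - f x)
        = (∫ y, heatKernel d t (x-y) * f y) - ∫ y, heatKernel d t (x-y) * f x := by
      rw [← integral_sub h2 (hkerx.mul_const (f x))]
      congr 1; ext y; ring
    rw [heatSemigroup, e, integral_mul_const, hxker, one_mul]
  rw [key]
  have hbound : ∀ y, ‖heatKernel d t (x-y) * (f y - f x)‖
      ≤ Cf * (heatKernel d t (x-y) * ‖x-y‖^(2*θ)) := by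
    intro y
    rw [Real.norm_eq_abs, abs_mul, abs_of_nonneg (hk_nonneg ht _)]
    have := hHolder y x
    rw [norm_sub_rev] at this
    calc heatKernel d t (x-y) * |f y - f x| ≤ heatKernel d t (x-y) * (Cf * ‖x-y‖^(2*θ)) :=
          mul_le_mul_of_nonneg_left this (hk_nonneg ht _)
      _ = Cf * (heatKernel d t (x-y) * ‖x-y‖^(2*θ)) := by ring
  calc |∫ y, heatKernel d t (x-y) * (f y - f x)|
      ≤ ∫ y, Cf * (heatKernel d t (x-y) * ‖x-y‖^(2*θ)) := by
        rw [← Real.norm_eq_abs]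
        exact norm_integral_le_of_norm_le (hmomc.const_mul Cf)
          (Filter.Eventually.of_forall hbound)
    _ = Cf * ∫ y, heatKernel d t (x-y) * ‖x-y‖^(2*θ) := integral_const_mul _ _
    _ = Cf * ∫ z, heatKernel d t z * ‖z‖^(2*θ) := by
        rw [intSubLeft (fun z => heatKernel d t z * ‖z‖^(2*θ)) x]
    _ = Cf * (K * t ^ θ) := by rw [kmom_val ht hθ1 hθ2, hK, hI, mul_assoc]
    _ ≤ (K + 1) * t ^ θ * Cf := by
        have htθ : 0 ≤ t ^ θ := Real.rpow_nonneg ht.le θ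
        nlinarith

end
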